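/- Let G be a group and V a braided monoidal category. Given a family of comonoids (g(p), δ_p, ε_p) for p ∈ G, morphisms μ_{p,q} : g(p) ⊗ g(q) → g(pq) and η : 𝟙 → g(e) making g a semi-Hopf G-monoid (i.e. all μ_{p,q} and η are comonoid morphisms and (g, μ, η) is associative and unital), and an antipode family σ_p : g(p) → g(p⁻¹), the two antipode axioms μ_{p⁻¹,p} ∘ (σ_p ⊗ 1) ∘ δ_p = η ∘ ε_p (landing in g(e) via p⁻¹p = e) and μ_{p,p⁻¹} ∘ (1 ⊗ σ_p) ∘ δ_p = η ∘ ε_p are together equivalent to the bimonoid (g, μ, η, δ, ε) in the Zunino category being a Hopf monoid (i.e. the antipode axioms for the induced bimonoid hold). -/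

import Mathlib

open CategoryTheory MonoidalCategory

set_option linter.unusedSectionVars false

universe v u

variable (V : Type u) [Category.{v} V] [MonoidalCategory V] [BraidedCategory V]

/-- An object of the Zunino category `Span|V(1,1)`: a set together with a
`V`-labelling of its elements. -/
structure ZObj : Type (max (u + 1) (v + 1)) where
  carrier : Type
  label : carrier → V

/-- A morphism of the Zunino category: a function between the underlying sets
together with a family of morphisms of `V` between the labels. -/
structure ZHom (A B : ZObj V) where
  map : A.carrier → B.carrier
  app : ∀ c, A.label c ⟶ B.label (map c)

theorem ZHom.ext' {A B : ZObj V} {f g : ZHom V A B} (h : f.map = g.map)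
    (h' : ∀ c, f.app c ≫ eqToHom (by rw [h]) = g.app c) : f = g := by
  obtain ⟨fm, fa⟩ := f
  obtain ⟨gm, ga⟩ := g
  dsimp at h
  subst h
  simp only [eqToHom_refl, Category.comp_id] at h'
  congr 1
  funext c
  exact h' c

instance : Category (ZObj V) where
  Hom := ZHom V
  id A := ⟨fun c => c, fun c => 𝟙 (A.label c)⟩
  comp f g := ⟨fun c => g.map (f.map c), fun c => f.app c ≫ g.app (f.map c)⟩
  id_comp f := ZHom.ext' V rfl (fun c => by simp)
  comp_id f := ZHom.ext' V rfl (fun c => by simp)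
  assoc f g h := ZHom.ext' V rfl (fun c => by simp)


@[simp] theorem ZHom.comp_app {A B C : ZObj V} (f : A ⟶ B) (g : B ⟶ C) (c : A.carrier) :
    (f ≫ g).app c = f.app c ≫ g.app (f.map c) := rfl

@[simp] theorem ZHom.id_app {A : ZObj V} (c : A.carrier) :
    (𝟙 A : A ⟶ A).app c = 𝟙 (A.label c) := rfl

@[simp] theorem ZHom.comp_map {A B C : ZObj V} (f : A ⟶ B) (g : B ⟶ C) (c : A.carrier) :
    (f ≫ g).map c = g.map (f.map c) := rfl

/-- The monoidal structure (data) of the Zunino category: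
`(B,b) ⊗ (A,a) = (B × A, (d,c) ↦ b d ⊗ a c)`, with unit the singleton set labelled
by the monoidal unit of `V`, and componentwise structure isomorphisms. -/
def zStruct : MonoidalCategoryStruct (ZObj V) where
  tensorObj A B := ⟨A.carrier × B.carrier, fun p => A.label p.1 ⊗ B.label p.2⟩
  whiskerLeft A _ _ f := ⟨fun p => (p.1, f.map p.2), fun p => A.label p.1 ◁ f.app p.2⟩
  whiskerRight f C := ⟨fun p => (f.map p.1, p.2), fun p => f.app p.1 ▷ C.label p.2⟩
  tensorHom f g := ⟨fun p => (f.map p.1, g.map p.2), fun p => f.app p.1 ⊗ₘ g.app p.2⟩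
  tensorUnit := ⟨PUnit, fun _ => 𝟙_ V⟩
  associator A B C :=
    { hom := ⟨fun p => (p.1.1, (p.1.2, p.2)), fun p => (α_ _ _ _).hom⟩
      inv := ⟨fun p => ((p.1, p.2.1), p.2.2), fun p => (α_ _ _ _).inv⟩
      hom_inv_id := ZHom.ext' V rfl (fun c => by simp)
      inv_hom_id := ZHom.ext' V rfl (fun c => by simp) }
  leftUnitor A :=
    { hom := ⟨fun p => p.2, fun p => (λ_ _).hom⟩
      inv := ⟨fun c => (PUnit.unit, c), fun c => (λ_ _).inv⟩
      hom_inv_id := ZHom.ext' V rfl (fun c => by simp)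
      inv_hom_id := ZHom.ext' V rfl (fun c => by simp) }
  rightUnitor A :=
    { hom := ⟨fun p => p.1, fun p => (ρ_ _).hom⟩
      inv := ⟨fun c => (c, PUnit.unit), fun c => (ρ_ _).inv⟩
      hom_inv_id := ZHom.ext' V rfl (fun c => by simp)
      inv_hom_id := ZHom.ext' V rfl (fun c => by simp) }

attribute [instance] zStruct
section HopfGroupMonoid

variable {G : Type} [Group G]
  -- a family of comonoids in `V` indexed by `G`
  (g : G → V) (δ : ∀ p, g p ⟶ g p ⊗ g p) (ε : ∀ p, g p ⟶ 𝟙_ V)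
  -- multiplication and unit morphisms
  (μ : ∀ p q : G, g p ⊗ g q ⟶ g (p * q)) (η : 𝟙_ V ⟶ g 1)
  -- the antipode family
  (σ : ∀ p : G, g p ⟶ g p⁻¹)

/-- The underlying Zunino object of a semi-Hopf `G`-monoid. -/
abbrev Zg : ZObj V := ⟨G, g⟩

/-- The Zunino multiplication. -/
def Zmul : (Zg V g ⊗ Zg V g : ZObj V) ⟶ Zg V g := ⟨fun p => p.1 * p.2, fun p => μ p.1 p.2⟩

/-- The Zunino unit. -/
def Zone : 𝟙_ (ZObj V) ⟶ Zg V g := ⟨fun _ => 1, fun _ => η⟩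

/-- The Zunino comultiplication (diagonal). -/
def Zcomul : Zg V g ⟶ (Zg V g ⊗ Zg V g : ZObj V) := ⟨fun p => (p, p), fun p => δ p⟩

/-- The Zunino counit. -/
def Zcounit : Zg V g ⟶ 𝟙_ (ZObj V) := ⟨fun _ => PUnit.unit, fun p => ε p⟩

/-- The Zunino antipode (inversion together with the family `σ`). -/
def ZS : Zg V g ⟶ Zg V g := ⟨fun p => p⁻¹, fun p => σ p⟩

theorem zhom_congr_app {A B : ZObj V} {f f' : A ⟶ B} (h : f = f') (c : A.carrier) :
    f.app c ≫ eqToHom (by rw [h]) = f'.app c := by subst h; simp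

/-- For a semi-Hopf `G`-monoid `g` in a braided monoidal category `V` (a family of
comonoids with comonoid morphisms `μ`, `η` that are associative and unital) together
with a family `σ_p : g p ⟶ g p⁻¹`, the two componentwise antipode axioms
`μ_{p⁻¹,p} ∘ (σ_p ⊗ 1) ∘ δ_p = η ∘ ε_p` and `μ_{p,p⁻¹} ∘ (1 ⊗ σ_p) ∘ δ_p = η ∘ ε_p`
hold for all `p` if and only if the induced bimonoid in the Zunino category is a
Hopf monoid with antipode `(·⁻¹, σ)`, i.e. the antipode axioms hold there. -/
theorem hopfGroupMonoid_iff_zunino_hopf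
    -- comonoid axioms for each `g p`
    (hco : ∀ p, δ p ≫ (g p ◁ δ p) = δ p ≫ (δ p ▷ g p) ≫ (α_ (g p) (g p) (g p)).hom)
    (hcl : ∀ p, δ p ≫ (ε p ▷ g p) = (λ_ (g p)).inv)
    (hcr : ∀ p, δ p ≫ (g p ◁ ε p) = (ρ_ (g p)).inv)
    -- associativity and unitality of `μ`, `η`
    (hassoc : ∀ p q r : G,
      (μ p q ⊗ₘ 𝟙 (g r)) ≫ μ (p * q) r ≫ eqToHom (congrArg g (mul_assoc p q r)) =
        (α_ (g p) (g q) (g r)).hom ≫ (𝟙 (g p) ⊗ₘ μ q r) ≫ μ p (q * r))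
    (hlu : ∀ p : G,
      (η ⊗ₘ 𝟙 (g p)) ≫ μ 1 p ≫ eqToHom (congrArg g (one_mul p)) = (λ_ (g p)).hom)
    (hru : ∀ p : G,
      (𝟙 (g p) ⊗ₘ η) ≫ μ p 1 ≫ eqToHom (congrArg g (mul_one p)) = (ρ_ (g p)).hom)
    -- `μ` and `η` are comonoid morphisms
    (hμδ : ∀ p q : G, μ p q ≫ δ (p * q) =
      (δ p ⊗ₘ δ q) ≫ tensorμ (g p) (g p) (g q) (g q) ≫ (μ p q ⊗ₘ μ p q))
    (hμε : ∀ p q : G, μ p q ≫ ε (p * q) = (ε p ⊗ₘ ε q) ≫ (λ_ (𝟙_ V)).hom)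
    (hηδ : η ≫ δ 1 = (λ_ (𝟙_ V)).inv ≫ (η ⊗ₘ η))
    (hηε : η ≫ ε 1 = 𝟙 (𝟙_ V)) :
    ((∀ p : G, δ p ≫ (σ p ⊗ₘ 𝟙 (g p)) ≫ μ p⁻¹ p ≫
          eqToHom (congrArg g (inv_mul_cancel p)) = ε p ≫ η) ∧
      (∀ p : G, δ p ≫ (𝟙 (g p) ⊗ₘ σ p) ≫ μ p p⁻¹ ≫
          eqToHom (congrArg g (mul_inv_cancel p)) = ε p ≫ η)) ↔
    (Zcomul V g δ ≫ (ZS V g σ ⊗ₘ 𝟙 (Zg V g)) ≫ Zmul V g μ =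
        Zcounit V g ε ≫ Zone V g η ∧
      Zcomul V g δ ≫ (𝟙 (Zg V g) ⊗ₘ ZS V g σ) ≫ Zmul V g μ =
        Zcounit V g ε ≫ Zone V g η) := by
  constructor
  · rintro ⟨h1, h2⟩
    constructor
    · apply ZHom.ext' V (funext fun p => inv_mul_cancel p)
      intro p
      show (δ p ≫ ((σ p ⊗ₘ 𝟙 (g p)) ≫ μ p⁻¹ p)) ≫
          eqToHom (congrArg g (inv_mul_cancel p)) = ε p ≫ η
      simpa only [Category.assoc] using h1 p
    · apply ZHom.ext' V (funext fun p => mul_inv_cancel p)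
      intro p
      show (δ p ≫ ((𝟙 (g p) ⊗ₘ σ p) ≫ μ p p⁻¹)) ≫
          eqToHom (congrArg g (mul_inv_cancel p)) = ε p ≫ η
      simpa only [Category.assoc] using h2 p
  · rintro ⟨h1, h2⟩
    constructor
    · intro p
      have h : (δ p ≫ ((σ p ⊗ₘ 𝟙 (g p)) ≫ μ p⁻¹ p)) ≫
          eqToHom (congrArg g (inv_mul_cancel p)) = ε p ≫ η := zhom_congr_app V h1 p
      simpa only [Category.assoc] using h
    · intro p
      have h : (δ p ≫ ((𝟙 (g p) ⊗ₘ σ p) ≫ μ p p⁻¹)) ≫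
          eqToHom (congrArg g (mul_inv_cancel p)) = ε p ≫ η :=
zhom_congr_app V h2 p
      simpa only [Category.assoc] using h

end HopfGroupMonoid
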